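/- Let n ≥ 1 and let T be a tree on n vertices. If T' is a tree obtained from T by a finite sequence of splittings, each splitting applied at a vertex of degree greater than 3, then the number of vertices of T' is at most 2n. -/

import Mathlib

open SimpleGraph

/-- The adjacency relation of the splitting of the tree `Gt` at the vertex `x`, whose
neighbours are enumerated by `e : Fin k → α`. -/
def splitAdj {α : Type} (Gt : SimpleGraph α) (x : α) (k : ℕ) (e : Fin k → α) :
    ({y : α // y ≠ x} ⊕ Fin k) → ({y : α // y ≠ x} ⊕ Fin k) → Prop
  | Sum.inl y, Sum.inl z => Gt.Adj y.1 z.1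
  | Sum.inl y, Sum.inr i => y.1 = e i
  | Sum.inr i, Sum.inl y => y.1 = e i
  | Sum.inr i, Sum.inr j => (i : ℕ) + 1 = (j : ℕ) ∨ (j : ℕ) + 1 = (i : ℕ)

/-- The graph obtained by splitting `Gt` at `x` (with neighbours enumerated by `e`). -/
def splitGraph {α : Type} (Gt : SimpleGraph α) (x : α) (k : ℕ) (e : Fin k → α) :
    SimpleGraph ({y : α // y ≠ x} ⊕ Fin k) where
  Adj := splitAdj Gt x k e
  symm := by
    constructor
    rintro (y | i) (z | j) h <;> simp only [splitAdj] at h ⊢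
    · exact Gt.adj_symm h
    · exact h
    · exact h
    · omega
  loopless := by
    constructor
    rintro (y | i) h <;> simp only [splitAdj] at h
    · exact Gt.irrefl h
    · omega

/-- `T'` is (isomorphic to) the graph obtained by splitting `T` at some vertex `x` of degree
`k ≥ 4`, for some enumeration `e` of the neighbours of `x`. -/
def IsSplitOf {α β : Type} (T : SimpleGraph α) (T' : SimpleGraph β) : Prop :=
  ∃ (x : α) (k : ℕ) (e : Fin k → α),
    4 ≤ k ∧ Function.Injective e ∧ (∀ i, T.Adj x (e i)) ∧
    (∀ y, T.Adj x y → ∃ i, e i = y) ∧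
    Nonempty (T' ≃g splitGraph T x k e)

/-- `SplitSeq T T'` : `T'` is obtained from `T` by a finite sequence of splittings, each
applied at a vertex of degree greater than `3`. -/
inductive SplitSeq : {α β : Type} → SimpleGraph α → SimpleGraph β → Prop
  | refl {α : Type} (T : SimpleGraph α) : SplitSeq T T
  | step {α β γ : Type} {T : SimpleGraph α} {T₁ : SimpleGraph β} {T₂ : SimpleGraph γ} :
      SplitSeq T T₁ → IsSplitOf T₁ T₂ → SplitSeq T T₂

namespace SplitSeqProof

/-- weight function -/
def fw (d : ℕ) : ℕ := if 4 ≤ d then d - 1 else 0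

lemma fw_mono {a b : ℕ} (h : a ≤ b) : fw a ≤ fw b := by
  unfold fw; split_ifs <;> omega

/-- degree via ncard -/
noncomputable def dg {V : Type} (G : SimpleGraph V) (v : V) : ℕ := (G.neighborSet v).ncard

/-- potential -/
noncomputable def phi {V : Type} (G : SimpleGraph V) : ℕ := Nat.card V + ∑ᶠ v, fw (dg G v)

lemma dg_iso {V W : Type} {G : SimpleGraph V} {G' : SimpleGraph W} (e : G ≃g G') (v : V) :
    dg G' (e v) = dg G v := by
  unfold dg
  rw [← Nat.card_coe_set_eq, ← Nat.card_coe_set_eq]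
  exact (Nat.card_congr (e.mapNeighborSet v)).symm

lemma phi_iso {V W : Type} {G : SimpleGraph V} {G' : SimpleGraph W} (e : G ≃g G') :
    phi G' = phi G := by
  unfold phi
  rw [Nat.card_congr e.toEquiv.symm]
  congr 1
  rw [← finsum_comp_equiv e.toEquiv]
  exact finsum_congr fun v => congrArg fw (dg_iso e v)

lemma card_le_phi {V : Type} (G : SimpleGraph V) : Nat.card V ≤ phi G :=
  Nat.le_add_right _ _

section Split

variable {α : Type} [Fintype α] (T : SimpleGraph α) (x : α) (k : ℕ) (e : Fin k → α)

lemma phi_split (hk : 4 ≤ k) (he : Function.Injective e)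
    (hadj : ∀ i, T.Adj x (e i)) (hsurj : ∀ y, T.Adj x y → ∃ i, e i = y) :
    phi (splitGraph T x k e) ≤ phi T := by
  classical
  set S := splitGraph T x k e with hS
  -- degree of x in T is at least k
  have hdx : k ≤ dg T x := by
    have : Nat.card (Fin k) ≤ Nat.card (T.neighborSet x) := by
      refine Nat.card_le_card_of_injective (fun i => ⟨e i, hadj i⟩) ?_
      intro i j hij
      exact he (congrArg Subtype.val hij)
    calc k = Nat.card (Fin k) := by simp
      _ ≤ Nat.card (T.neighborSet x) := this
      _ = dg T x := Nat.card_coe_set_eq _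
  -- degree of inl y in S is at most degree of y in T
  have hinl : ∀ y : {y : α // y ≠ x}, dg S (Sum.inl y) ≤ dg T y.1 := by
    intro y
    have : Nat.card (S.neighborSet (Sum.inl y)) ≤ Nat.card (T.neighborSet y.1) := by
      refine Nat.card_le_card_of_injective
        (fun w => match w with
          | ⟨Sum.inl z, hz⟩ => ⟨z.1, hz⟩
          | ⟨Sum.inr i, hi⟩ => ⟨x, by
              have h1 : y.1 = e i := hi
              have h2 := (hadj i).symm
              rw [← h1] at h2
              exact h2⟩) ?_
      rintro ⟨(z | i), hz⟩ ⟨(z' | i'), hz'⟩ hww <;>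
        simp only [Subtype.mk.injEq] at hww
      · apply Subtype.ext; simp only [Sum.inl.injEq]; have hv := congrArg Subtype.val hww; exact Subtype.ext hv
      · exact (z.2 (congrArg Subtype.val hww)).elim
      · exact (z'.2 (congrArg Subtype.val hww).symm).elim
      · apply Subtype.ext; simp only [Sum.inr.injEq]
        have h1 : y.1 = e i := hz
        have h2 : y.1 = e i' := hz'
        exact he (h1 ▸ h2)
    simpa only [dg, Nat.card_coe_set_eq] using this
  -- degree of inr i in S is at most 3
  have hinr : ∀ i : Fin k, dg S (Sum.inr i) ≤ 3 := by
    intro i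
    have : Nat.card (S.neighborSet (Sum.inr i)) ≤ Nat.card (Fin 3) := by
      refine Nat.card_le_card_of_injective
        (fun w => match w with
          | ⟨Sum.inl z, _⟩ => (0 : Fin 3)
          | ⟨Sum.inr j, _⟩ => if (j : ℕ) < (i : ℕ) then 1 else 2) ?_
      rintro ⟨(z | j), hz⟩ ⟨(z' | j'), hz'⟩ hww <;> dsimp only at hww
      · apply Subtype.ext; simp only [Sum.inl.injEq]
        have h1 : z.1 = e i := hz
        have h2 : z'.1 = e i := hz'
        exact Subtype.ext (h1.trans h2.symm)
      · exfalso; split_ifs at hww <;> exact absurd hww (by decide)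
      · exfalso; split_ifs at hww <;> exact absurd hww (by decide)
      · apply Subtype.ext; simp only [Sum.inr.injEq]
        have h1 : (i : ℕ) + 1 = (j : ℕ) ∨ (j : ℕ) + 1 = (i : ℕ) := hz
        have h2 : (i : ℕ) + 1 = (j' : ℕ) ∨ (j' : ℕ) + 1 = (i : ℕ) := hz'
        refine Fin.ext ?_
        rcases h1 with h1 | h1 <;> rcases h2 with h2 | h2 <;>
          split_ifs at hww <;> first | omega | exact absurd hww (by decide)
    calc dg S (Sum.inr i) = Nat.card (S.neighborSet (Sum.inr i)) :=
          (Nat.card_coe_set_eq _).symm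
      _ ≤ Nat.card (Fin 3) := this
      _ = 3 := by simp
  have hfinr : ∀ i : Fin k, fw (dg S (Sum.inr i)) = 0 := by
    intro i; unfold fw; have := hinr i; split_ifs with h <;> omega
  -- cardinalities
  have hx1 : 1 ≤ Fintype.card α := Fintype.card_pos_iff.mpr ⟨x⟩
  have hcards : Nat.card ({y : α // y ≠ x} ⊕ Fin k) = Fintype.card α - 1 + k := by
    rw [Nat.card_eq_fintype_card, Fintype.card_sum, Fintype.card_fin]
    congr 1
    have : Fintype.card {y : α // ¬ y = x} = Fintype.card α - Fintype.card {y : α // y = x} :=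
      Fintype.card_subtype_compl _
    simpa [Fintype.card_subtype_eq] using this
  -- sum over α splits off x
  have hsum : ∑ v : α, fw (dg T v) =
      (∑ y : {y : α // y ≠ x}, fw (dg T y.1)) + fw (dg T x) := by
    rw [← Finset.sum_subtype (Finset.univ.erase x)
      (fun a => by simp [Finset.mem_erase]) (fun v => fw (dg T v))]
    rw [Finset.sum_erase_add]
    exact Finset.mem_univ x
  have hfx : k - 1 ≤ fw (dg T x) := by
    have := fw_mono hdx
    unfold fw at this ⊢
    rw [if_pos hk] at this
    omega
  unfold phi
  rw [finsum_eq_sum_of_fintype, finsum_eq_sum_of_fintype, Fintype.sum_sum_type,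
    hcards, Nat.card_eq_fintype_card, hsum]
  have hA : ∑ y : {y : α // y ≠ x}, fw (dg S (Sum.inl y)) ≤
      ∑ y : {y : α // y ≠ x}, fw (dg T y.1) :=
    Finset.sum_le_sum fun y _ => fw_mono (hinl y)
  have hB : ∑ i : Fin k, fw (dg S (Sum.inr i)) = 0 :=
    Finset.sum_eq_zero fun i _ => hfinr i
  omega

end Split

lemma dg_eq_degree {α : Type} [Fintype α] (T : SimpleGraph α) [DecidableRel T.Adj] (v : α) :
    dg T v = T.degree v := by
  unfold dg
  rw [Set.ncard_eq_toFinset_card']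
  rfl

lemma phi_tree {α : Type} [Fintype α] (T : SimpleGraph α) (hT : T.IsTree) :
    phi T ≤ 2 * Fintype.card α := by
  classical
  unfold phi
  rw [finsum_eq_sum_of_fintype, Nat.card_eq_fintype_card]
  by_cases hone : Fintype.card α ≤ 1
  · have hdeg : ∀ v : α, dg T v = 0 := by
      intro v
      have : T.neighborSet v = ∅ := by
        ext w
        simp only [mem_neighborSet, Set.mem_empty_iff_false, iff_false]
        intro h
        exact (T.ne_of_adj h) (Fintype.card_le_one_iff.mp hone v w)
      simp [dg, this]
    have : ∑ v : α, fw (dg T v) = 0 := Finset.sum_eq_zero fun v _ => by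
      rw [hdeg v]; rfl
    omega
  · push_neg at hone
    have hdegpos : ∀ v : α, 1 ≤ dg T v := by
      intro v
      obtain ⟨w, hw⟩ := Fintype.exists_ne_of_one_lt_card hone v
      obtain ⟨p⟩ := hT.isConnected.preconnected v w
      have hnil : ¬ p.Nil := SimpleGraph.Walk.not_nil_of_ne (Ne.symm hw)
      have hadj := p.adj_snd hnil
      rw [dg_eq_degree]
      exact (T.degree_pos_iff_exists_adj v).mpr ⟨_, hadj⟩
    have hsum : ∑ v : α, dg T v = 2 * (Fintype.card α - 1) := by
      have h1 : ∑ v : α, T.degree v = 2 * T.edgeFinset.card :=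
        T.sum_degrees_eq_twice_card_edges
      have h2 : T.edgeFinset.card + 1 = Fintype.card α := hT.card_edgeFinset
      calc ∑ v : α, dg T v = ∑ v : α, T.degree v :=
            Finset.sum_congr rfl fun v _ => dg_eq_degree T v
        _ = 2 * T.edgeFinset.card := h1
        _ = 2 * (Fintype.card α - 1) := by omega
    have hfle : ∀ v : α, fw (dg T v) + 1 ≤ dg T v := by
      intro v
      have := hdegpos v
      unfold fw; split_ifs <;> omega
    have : ∑ v : α, (fw (dg T v) + 1) ≤ ∑ v : α, dg T v :=
      Finset.sum_le_sum fun v _ => hfle v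
    rw [Finset.sum_add_distrib, Finset.sum_const, Finset.card_univ, smul_eq_mul, mul_one,
      hsum] at this
    omega

lemma splitSeq_aux {α β : Type} {T : SimpleGraph α} {T' : SimpleGraph β}
    (h : SplitSeq T T') : Fintype α → ∃ _ : Fintype β, phi T' ≤ phi T := by
  induction h with
  | refl T => intro inst; exact ⟨inst, le_rfl⟩
  | step hseq hsplit ih =>
    intro inst
    obtain ⟨instβ, h1⟩ := ih inst
    obtain ⟨x, k, e, hk, he, hadj, hsurj, ⟨iso⟩⟩ := hsplit
    classical
    refine ⟨Fintype.ofEquiv _ iso.toEquiv.symm,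
      le_trans (le_of_eq (phi_iso iso).symm)
        (le_trans (phi_split _ x k e hk he hadj hsurj) h1)⟩

end SplitSeqProof


/-- If `T` is a tree on `n ≥ 1` vertices and `T'` is obtained from `T` by a finite sequence
of splittings at vertices of degree greater than `3`, then `T'` has at most `2n` vertices. -/
theorem splitSeq_card_le {α β : Type} [Fintype α] (n : ℕ) (hn : 1 ≤ n)
    (hcard : Fintype.card α = n)
    (T : SimpleGraph α) (hT : T.IsTree)
    (T' : SimpleGraph β) (hseq : SplitSeq T T') :
    Nat.card β ≤ 2 * n := by
  obtain ⟨instβ, hphi⟩ := SplitSeqProof.splitSeq_aux hseq ‹Fintype α›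
  have h1 := SplitSeqProof.card_le_phi T'
  have h2 := SplitSeqProof.phi_tree T hT
  rw [hcard] at h2
  omega
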